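/- If P : C^op → InfSL is a primary doctrine on a category C with finite products and Λ is the class of product projections, then P^∃ : C^op → InfSL is an existential doctrine: every reindexing along a projection has a left adjoint, and these adjoints satisfy Beck–Chevalley for pullbacks of projections and Frobenius reciprocity. -/

import Mathlib

open CategoryTheory Limits

universe w v u

/-- Existence form of the pullback lifting property. -/
theorem pbLift {C : Type u} [Category.{v} C] {P X Y Z : C} {fst : P ⟶ X} {snd : P ⟶ Y}
    {f : X ⟶ Z} {g : Y ⟶ Z} (h : IsPullback fst snd f g) {W : C} (a : W ⟶ X) (b : W ⟶ Y)
    (w : a ≫ f = b ≫ g) : ∃ l : W ⟶ P, l ≫ fst = a ∧ l ≫ snd = b :=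
  ⟨h.lift a b w, h.lift_fst a b w, h.lift_snd a b w⟩

/-- A primary doctrine: a contravariant assignment of inf-semilattices with top
to objects of `C`, functorial and meet/top-preserving on morphisms. -/
structure PrimaryDoctrine (C : Type u) [Category.{v} C] where
  P : C → Type w
  [instInf : ∀ A, SemilatticeInf (P A)]
  [instTop : ∀ A, OrderTop (P A)]
  map : ∀ {A B : C}, (A ⟶ B) → P B → P A
  map_id : ∀ (A : C) (α : P A), map (𝟙 A) α = α
  map_comp : ∀ {A B D : C} (f : A ⟶ B) (g : B ⟶ D) (α : P D),
    map (f ≫ g) α = map f (map g α)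
  map_mono : ∀ {A B : C} (f : A ⟶ B), Monotone (map f)
  map_top : ∀ {A B : C} (f : A ⟶ B), map f ⊤ = ⊤
  map_inf : ∀ {A B : C} (f : A ⟶ B) (α β : P B), map f (α ⊓ β) = map f α ⊓ map f β

attribute [instance] PrimaryDoctrine.instInf PrimaryDoctrine.instTop

/-- A class `Λ` of morphisms containing identities, closed under composition,
and closed under (chosen) pullbacks along arbitrary morphisms. -/
structure LambdaClass (C : Type u) [Category.{v} C] where
  mem : ∀ {X Y : C}, (X ⟶ Y) → Prop
  id_mem : ∀ X : C, mem (𝟙 X)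
  comp_mem : ∀ {X Y Z : C} {f : X ⟶ Y} {g : Y ⟶ Z}, mem f → mem g → mem (f ≫ g)
  pbObj : ∀ {X Y Z : C} (g : X ⟶ Z), mem g → ∀ _f : Y ⟶ Z, C
  pbFst : ∀ {X Y Z : C} (g : X ⟶ Z) (hg : mem g) (f : Y ⟶ Z), pbObj g hg f ⟶ X
  pbSnd : ∀ {X Y Z : C} (g : X ⟶ Z) (hg : mem g) (f : Y ⟶ Z), pbObj g hg f ⟶ Y
  isPB : ∀ {X Y Z : C} (g : X ⟶ Z) (hg : mem g) (f : Y ⟶ Z),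
    IsPullback (pbFst g hg f) (pbSnd g hg f) g f
  pbSnd_mem : ∀ {X Y Z : C} (g : X ⟶ Z) (hg : mem g) (f : Y ⟶ Z), mem (pbSnd g hg f)

variable {C : Type u} [Category.{v} C]

/-- An element of the fibre `P^∃(A)` of the existential completion:
a pair of a morphism `g : B ⟶ A` in `Λ` and `α ∈ P(B)`. -/
structure ExEl (P : PrimaryDoctrine C) (L : LambdaClass C) (A : C) where
  B : C
  g : B ⟶ A
  hg : L.mem g
  α : P.P B

variable {P : PrimaryDoctrine C} {L : LambdaClass C}

/-- The preorder on `P^∃(A)`. -/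
def ExLe {A : C} (x y : ExEl P L A) : Prop :=
  ∃ w : x.B ⟶ y.B, w ≫ y.g = x.g ∧ x.α ≤ P.map w y.α

/-- Equivalence in the preorder `P^∃(A)`. -/
def ExEquiv {A : C} (x y : ExEl P L A) : Prop := ExLe x y ∧ ExLe y x

/-- The top element `(id_A, ⊤_A)` of `P^∃(A)`. -/
def topE (P : PrimaryDoctrine C) (L : LambdaClass C) (A : C) : ExEl P L A :=
  ⟨A, 𝟙 A, L.id_mem A, ⊤⟩

/-- Reindexing `P^∃_f` along `f : A ⟶ B`, via the chosen pullback. -/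
def reindex {A B : C} (f : A ⟶ B) (y : ExEl P L B) : ExEl P L A :=
  ⟨L.pbObj y.g y.hg f, L.pbSnd y.g y.hg f, L.pbSnd_mem y.g y.hg f,
   P.map (L.pbFst y.g y.hg f) y.α⟩

/-- Binary infimum in `P^∃(A)`, constructed via the chosen pullback. -/
def infE {A : C} (x y : ExEl P L A) : ExEl P L A :=
  ⟨L.pbObj x.g x.hg y.g, L.pbFst x.g x.hg y.g ≫ x.g,
   (by rw [(L.isPB x.g x.hg y.g).w]
       exact L.comp_mem (L.pbSnd_mem x.g x.hg y.g) y.hg),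
   P.map (L.pbFst x.g x.hg y.g) x.α ⊓ P.map (L.pbSnd x.g x.hg y.g) y.α⟩

/-- The left adjoint `∃^e_f` along `f ∈ Λ`, given by post-composition. -/
def existE {A B : C} (f : A ⟶ B) (hf : L.mem f) (x : ExEl P L A) : ExEl P L B :=
  ⟨x.B, x.g ≫ f, L.comp_mem x.hg hf, x.α⟩

/-- The unit `ι_A : P(A) → P^∃(A)`, `α ↦ (id_A, α)`. -/
def iota (P : PrimaryDoctrine C) (L : LambdaClass C) (A : C) (α : P.P A) : ExEl P L A :=
  ⟨A, 𝟙 A, L.id_mem A, α⟩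

/-- With `Λ` the class of product projections, the existential completion `P^∃`
is an existential doctrine: reindexing along any projection has a left adjoint
(given by post-composition), and these satisfy Beck–Chevalley for pullbacks of
morphisms of `Λ` and Frobenius reciprocity. -/
theorem existential_completion_is_existential [HasFiniteProducts C]
    (P : PrimaryDoctrine C) (L : LambdaClass C)
    (hproj : ∀ A B : C, L.mem (prod.fst : A ⨯ B ⟶ A)) :
    (∀ (A B : C) (x : ExEl P L (A ⨯ B)) (y : ExEl P L A),
      ExLe (existE prod.fst (hproj A B) x) y ↔ ExLe x (reindex prod.fst y)) ∧
    (∀ {X' A' X A : C} (g' : X' ⟶ A') (f' : X' ⟶ X) (f : A' ⟶ A) (g : X ⟶ A)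
      (hg : L.mem g) (hg' : L.mem g'), IsPullback g' f' f g →
      ∀ β : ExEl P L X,
        ExEquiv (existE g' hg' (reindex f' β)) (reindex f (existE g hg β))) ∧
    (∀ {X A : C} (f : X ⟶ A) (hf : L.mem f) (a : ExEl P L A) (b : ExEl P L X),
      ExEquiv (existE f hf (infE (reindex f a) b)) (infE a (existE f hf b))) := by
  classical
  refine ⟨?_, ?_, ?_⟩
  · -- adjunction
    intro A B x y
    have hPB := L.isPB y.g y.hg (prod.fst : A ⨯ B ⟶ A)
    constructor
    · rintro ⟨w, hw, hle⟩
      obtain ⟨u, hu1, hu2⟩ := pbLift hPB w x.g (by simpa [existE] using hw)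
      refine ⟨u, hu2, ?_⟩
      dsimp only [existE, reindex] at *
      exact hle.trans (le_of_eq (by rw [← hu1]; exact P.map_comp _ _ _))
    · rintro ⟨w, hw, hle⟩
      dsimp only [existE, reindex] at *
      refine ⟨w ≫ L.pbFst y.g y.hg prod.fst, ?_, ?_⟩
      · show (w ≫ L.pbFst y.g y.hg prod.fst) ≫ y.g = x.g ≫ prod.fst
        exact (Category.assoc _ _ _).trans ((congrArg (w ≫ ·) hPB.w).trans
          ((Category.assoc _ _ _).symm.trans (congrArg (· ≫ prod.fst) hw)))
      · show x.α ≤ P.map (w ≫ L.pbFst y.g y.hg prod.fst) y.α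
        exact hle.trans (le_of_eq (P.map_comp _ _ _).symm)
  · -- Beck–Chevalley
    intro X' A' X A g' f' f g hg hg' hpb β
    have hQ := L.isPB β.g β.hg f'
    have hR := L.isPB (β.g ≫ g) (L.comp_mem β.hg hg) f
    constructor
    · obtain ⟨u, hu1, hu2⟩ := pbLift hR (L.pbFst β.g β.hg f')
        (L.pbSnd β.g β.hg f' ≫ g')
        (by rw [← Category.assoc, hQ.w, Category.assoc, Category.assoc, hpb.w])
      refine ⟨u, ?_, ?_⟩
      · dsimp only [existE, reindex]; exact hu2
      · dsimp only [existE, reindex]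
        rw [← P.map_comp, hu1]
        exact le_rfl
    · obtain ⟨l, hl1, hl2⟩ := pbLift hpb (L.pbSnd (β.g ≫ g) (L.comp_mem β.hg hg) f)
        (L.pbFst (β.g ≫ g) (L.comp_mem β.hg hg) f ≫ β.g)
        (by rw [Category.assoc, hR.w])
      obtain ⟨v, hv1, hv2⟩ := pbLift hQ (L.pbFst (β.g ≫ g) (L.comp_mem β.hg hg) f) l
        (by rw [hl2])
      refine ⟨v, ?_, ?_⟩
      · dsimp only [existE, reindex]
        rw [← Category.assoc, hv2, hl1]
      · dsimp only [existE, reindex]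
        rw [← P.map_comp, hv1]
        exact le_rfl
  · -- Frobenius
    intro X A f hf a b
    have hS := L.isPB a.g a.hg f
    have hT := L.isPB (L.pbSnd a.g a.hg f) (L.pbSnd_mem a.g a.hg f) b.g
    have hU := L.isPB a.g a.hg (b.g ≫ f)
    constructor
    · obtain ⟨w, hw1, hw2⟩ := pbLift hU
        (L.pbFst (L.pbSnd a.g a.hg f) (L.pbSnd_mem a.g a.hg f) b.g ≫ L.pbFst a.g a.hg f)
        (L.pbSnd (L.pbSnd a.g a.hg f) (L.pbSnd_mem a.g a.hg f) b.g)
        (by rw [Category.assoc, hS.w, ← Category.assoc, hT.w, Category.assoc])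
      refine ⟨w, ?_, ?_⟩
      · dsimp only [existE, reindex, infE]
        rw [← Category.assoc, hw1, Category.assoc, hS.w, ← Category.assoc]
      · dsimp only [existE, reindex, infE]
        simp only [P.map_inf, ← P.map_comp, hw1, hw2]
        exact le_rfl
    · obtain ⟨l, hl1, hl2⟩ := pbLift hS (L.pbFst a.g a.hg (b.g ≫ f))
        (L.pbSnd a.g a.hg (b.g ≫ f) ≫ b.g)
        (by rw [hU.w, Category.assoc])
      obtain ⟨v, hv1, hv2⟩ := pbLift hT l (L.pbSnd a.g a.hg (b.g ≫ f)) hl2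
      refine ⟨v, ?_, ?_⟩
      · dsimp only [existE, reindex, infE]
        rw [← Category.assoc, ← Category.assoc, hv1, hl2, Category.assoc, ← hU.w]
      · dsimp only [existE, reindex, infE]
        simp only [P.map_inf, ← P.map_comp, ← Category.assoc, hv1, hv2, hl1]
        exact le_rfl
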